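/- Let f : ℝ^n → ℝ be differentiable with gradient ∇f and L-smooth with L > 0, let 0 ≤ α < 1, δ ≥ 0, and let g̃ satisfy the composite noise condition with parameters α, δ. Set h = ((1−α)/(1+α))^{3/2}/(4L) and x' = x − h·g̃(x). Then f(x') ≤ f(x) − ((1−α)³/(1+α))·(1/(16L))·‖∇f(x)‖² + (3/(16L))·(1/(1+α)²)·δ². -/
import Mathlib


open scoped InnerProductSpace


set_option maxHeartbeats 1000000 in
lemma gd_core (L α δ N M I s : ℝ) (hL : 0 < L) (hα0 : 0 ≤ α) (hα1 : α < 1)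
    (hδ : 0 ≤ δ) (hN : 0 ≤ N) (hM : 0 ≤ M)
    (hs0 : 0 < s) (hs2 : s ^ 2 * (1 + α) ^ 3 = (1 - α) ^ 3)
    (hsA : (1 - α) ^ 2 ≤ s * (1 + α)) (hsB : s * (1 + α) ≤ 1 - α)
    (hI : (1 - α) * N ^ 2 - δ * N ≤ I)
    (hMb : M ≤ (1 + α) * N + δ) :
    -(s / (4 * L) * I) + L / 2 * ((s / (4 * L)) ^ 2 * M ^ 2) ≤
      -((1 - α) ^ 3 / (1 + α)) * (1 / (16 * L)) * N ^ 2
        + 3 / (16 * L) * (1 / (1 + α) ^ 2) * δ ^ 2 := by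
  have hA : (0:ℝ) < 1 + α := by linarith
  have hB : (0:ℝ) < 1 - α := by linarith
  have hh0 : 0 < s / (4 * L) := by positivity
  have hM2 : M ^ 2 ≤ ((1 + α) * N + δ) ^ 2 := by nlinarith
  have e1 : 0 ≤ 4 * (1 - α) ^ 3 * (1 + α) ^ 2 * N ^ 2 - 8 * s * (1 + α) ^ 3 * (N * δ)
      + 4 * (1 + α) * δ ^ 2 := by
    nlinarith [mul_nonneg hA.le (sq_nonneg (s * (1 + α) ^ 2 * N - δ)), hs2,
      sq_nonneg ((1 + α) * N), mul_nonneg (sq_nonneg ((1+α)*N)) hA.le]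
  have e2 : 0 ≤ (s * (1 + α) - (1 - α) ^ 2) * (8 * (1 + α) ^ 2 * (1 - α) * N ^ 2) :=
    mul_nonneg (by linarith) (by positivity)
  have e3 : 0 ≤ (1 - α) ^ 3 * ((1 + α) * N - δ) ^ 2 := by positivity
  have hB3 : (1 - α) ^ 3 ≤ 1 := by nlinarith [pow_le_one₀ hB.le (by linarith : (1:ℝ) - α ≤ 1) (n := 3)]
  have e4 : 0 ≤ ((1 + α) - (1 - α) ^ 3) * δ ^ 2 :=
    mul_nonneg (by linarith) (sq_nonneg δ)
  have key : (3 * (1 - α) ^ 3 * (1 + α) ^ 2 - 8 * s * (1 + α) ^ 3 * (1 - α)) * N ^ 2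
      + (8 * s * (1 + α) ^ 3 + 2 * (1 - α) ^ 3 * (1 + α)) * (δ * N)
      + ((1 - α) ^ 3 - 6 * (1 + α)) * δ ^ 2 ≤ 0 := by nlinarith [e1, e2, e3, e4]
  have key2 : -8 * s * (1 + α) ^ 3 * (1 - α) * N ^ 2 + 8 * s * (1 + α) ^ 3 * (δ * N)
      + s ^ 2 * (1 + α) ^ 3 * ((1 + α) * N + δ) ^ 2
      + 2 * (1 - α) ^ 3 * (1 + α) ^ 2 * N ^ 2 - 6 * (1 + α) * δ ^ 2 ≤ 0 := by
    nlinarith [key, sq_nonneg ((1 + α) * N + δ),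
      mul_self_nonneg ((1 + α) * N + δ)]
  have main : -(s / (4 * L) * ((1 - α) * N ^ 2 - δ * N))
      + L / 2 * ((s / (4 * L)) ^ 2 * ((1 + α) * N + δ) ^ 2) ≤
      -((1 - α) ^ 3 / (1 + α)) * (1 / (16 * L)) * N ^ 2
        + 3 / (16 * L) * (1 / (1 + α) ^ 2) * δ ^ 2 := by
    rw [← sub_nonneg]
    have hid : (-((1 - α) ^ 3 / (1 + α)) * (1 / (16 * L)) * N ^ 2
        + 3 / (16 * L) * (1 / (1 + α) ^ 2) * δ ^ 2)
        - (-(s / (4 * L) * ((1 - α) * N ^ 2 - δ * N))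
          + L / 2 * ((s / (4 * L)) ^ 2 * ((1 + α) * N + δ) ^ 2))
        = (32 * L * (1 + α) ^ 3)⁻¹ *
          (-(-8 * s * (1 + α) ^ 3 * (1 - α) * N ^ 2 + 8 * s * (1 + α) ^ 3 * (δ * N)
            + s ^ 2 * (1 + α) ^ 3 * ((1 + α) * N + δ) ^ 2
            + 2 * (1 - α) ^ 3 * (1 + α) ^ 2 * N ^ 2 - 6 * (1 + α) * δ ^ 2)) := by
      field_simp
      ring
    rw [hid]
    exact mul_nonneg (by positivity) (by linarith)
  refine le_trans (add_le_add ?_ ?_) main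
  · have := mul_le_mul_of_nonneg_left hI hh0.le
    linarith
  · exact mul_le_mul_of_nonneg_left (mul_le_mul_of_nonneg_left hM2 (by positivity)) (by positivity)


/-- One gradient-descent step with composite noise decreases the function value. -/
theorem gd_step_decrease {n : ℕ} (f : EuclideanSpace ℝ (Fin n) → ℝ)
    (f' g : EuclideanSpace ℝ (Fin n) → EuclideanSpace ℝ (Fin n))
    (hgrad : ∀ x, HasGradientAt f (f' x) x)
    (L : ℝ) (hL : 0 < L)
    (hsmooth : ∀ x y : EuclideanSpace ℝ (Fin n),
      f y ≤ f x + ⟪f' x, y - x⟫_ℝ + L / 2 * ‖y - x‖ ^ 2)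
    (α δ : ℝ) (hα0 : 0 ≤ α) (hα1 : α < 1) (hδ : 0 ≤ δ)
    (hnoise : ∀ x, ‖g x - f' x‖ ≤ α * ‖f' x‖ + δ)
    (h : ℝ) (hh : h = ((1 - α) / (1 + α)) ^ ((3 : ℝ) / 2) / (4 * L))
    (x x' : EuclideanSpace ℝ (Fin n)) (hx' : x' = x - h • g x) :
    f x' ≤ f x - ((1 - α) ^ 3 / (1 + α)) * (1 / (16 * L)) * ‖f' x‖ ^ 2
      + (3 / (16 * L)) * (1 / (1 + α) ^ 2) * δ ^ 2 := by
  have hA : (0:ℝ) < 1 + α := by linarith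
  have hB : (0:ℝ) < 1 - α := by linarith
  have hr0 : (0:ℝ) < (1 - α) / (1 + α) := div_pos hB hA
  have hr1 : (1 - α) / (1 + α) ≤ 1 := by rw [div_le_one hA]; linarith
  set s : ℝ := ((1 - α) / (1 + α)) ^ ((3 : ℝ) / 2) with hsdef
  have hs0 : 0 < s := Real.rpow_pos_of_pos hr0 _
  have hsq : s ^ (2:ℕ) = ((1 - α) / (1 + α)) ^ (3:ℕ) := by
    rw [hsdef, ← Real.rpow_natCast (((1 - α) / (1 + α)) ^ ((3:ℝ)/2)) 2,
      ← Real.rpow_natCast ((1 - α) / (1 + α)) 3, ← Real.rpow_mul hr0.le]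
    norm_num
  have hs2 : s ^ 2 * (1 + α) ^ 3 = (1 - α) ^ 3 := by
    rw [hsq, div_pow]
    field_simp
  have hsA : (1 - α) ^ 2 ≤ s * (1 + α) := by
    have h1 : ((1 - α) ^ 2) ^ 2 ≤ (s * (1 + α)) ^ 2 := by
      nlinarith [hs2, sq_nonneg α, mul_pos hB (mul_pos hB hB)]
    nlinarith [h1, mul_pos hs0 hA, sq_nonneg (1 - α)]
  have hsB : s * (1 + α) ≤ 1 - α := by
    have h1 : s ≤ (1 - α) / (1 + α) := by
      calc s ≤ ((1 - α) / (1 + α)) ^ (1:ℝ) :=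
        Real.rpow_le_rpow_of_exponent_ge hr0 hr1 (by norm_num)
      _ = (1 - α) / (1 + α) := Real.rpow_one _
    rw [← le_div_iff₀ hA] at *
    exact h1
  -- geometry
  have hsm := hsmooth x x'
  have hxx : x' - x = -(h • g x) := by rw [hx']; abel
  rw [hxx] at hsm
  have hinner : ⟪f' x, -(h • g x)⟫_ℝ = -(h * ⟪f' x, g x⟫_ℝ) := by
    rw [inner_neg_right, real_inner_smul_right]
  have hnorm : ‖-(h • g x)‖ ^ 2 = h ^ 2 * ‖g x‖ ^ 2 := by
    rw [norm_neg, norm_smul, mul_pow, Real.norm_eq_abs, sq_abs]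
  rw [hinner, hnorm] at hsm
  -- bounds
  have hIlow : (1 - α) * ‖f' x‖ ^ 2 - δ * ‖f' x‖ ≤ ⟪f' x, g x⟫_ℝ := by
    have h1 : ⟪f' x, g x⟫_ℝ = ‖f' x‖ ^ 2 + ⟪f' x, g x - f' x⟫_ℝ := by
      rw [inner_sub_right, real_inner_self_eq_norm_sq]; ring
    have h2 := abs_real_inner_le_norm (f' x) (g x - f' x)
    have h3 := hnoise x
    have h4 := abs_le.1 h2
    nlinarith [mul_le_mul_of_nonneg_left h3 (norm_nonneg (f' x)), h4.1]
  have hMub : ‖g x‖ ≤ (1 + α) * ‖f' x‖ + δ := by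
    have h1 : ‖g x‖ ≤ ‖f' x‖ + ‖g x - f' x‖ := by
      calc ‖g x‖ = ‖f' x + (g x - f' x)‖ := by rw [add_sub_cancel]
      _ ≤ ‖f' x‖ + ‖g x - f' x‖ := norm_add_le _ _
    linarith [hnoise x]
  have hcore := gd_core L α δ (‖f' x‖) (‖g x‖) (⟪f' x, g x⟫_ℝ) s hL hα0 hα1 hδ
    (norm_nonneg _) (norm_nonneg _) hs0 hs2 hsA hsB hIlow hMub
  rw [hh] at hsm
  linarith [hsm, hcore]
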